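/- For every complex number z, the determinant det( Complex.cos(z·b) • (1 : E_ℂ →ₗ[ℂ] E_ℂ) − (Complex.sin(z·b)/b) • A_ℂ ) vanishes if and only if there exist a real eigenvalue λ of A and an integer j such that z = ((if λ = 0 then π/2 else Real.arctan (b/λ)) + j·π)/b. In particular, every complex zero of this function is real, so the complex focal radii coincide with the real focal radii. -/

import Mathlib

open scoped TensorProduct

lemma trig_factor_eq_zero_iff (b l : ℝ) (hb : 0 < b) (w : ℂ) :
    Complex.cos w - Complex.sin w / (b : ℂ) * (l : ℂ) = 0 ↔
      ∃ j : ℤ, w = (((if l = 0 then Real.pi / 2 else Real.arctan (b / l)) : ℝ) : ℂ)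
        + (j : ℂ) * (Real.pi : ℂ) := by
  have hb' : (b : ℂ) ≠ 0 := Complex.ofReal_ne_zero.mpr hb.ne'
  rcases eq_or_ne l 0 with rfl | hl
  · simp only [if_pos rfl, Complex.ofReal_zero, mul_zero, sub_zero]
    rw [Complex.cos_eq_zero_iff]
    constructor
    · rintro ⟨k, hk⟩; exact ⟨k, by rw [hk]; push_cast; ring⟩
    · rintro ⟨j, hj⟩; exact ⟨j, by rw [hj]; push_cast; ring⟩
  · set θ := Real.arctan (b / l) with hθdef
    have hcos : Real.cos θ ≠ 0 :=
      (Real.cos_pos_of_mem_Ioo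
        ⟨Real.neg_pi_div_two_lt_arctan _, Real.arctan_lt_pi_div_two _⟩).ne'
    have hsin : Real.sin θ = b / l * Real.cos θ := by
      have h := Real.tan_arctan (b / l)
      rw [Real.tan_eq_sin_div_cos, div_eq_iff hcos] at h
      exact h
    have hl' : (l : ℂ) ≠ 0 := Complex.ofReal_ne_zero.mpr hl
    have hcos' : (Real.cos θ : ℂ) ≠ 0 := Complex.ofReal_ne_zero.mpr hcos
    have key : Complex.sin ((θ : ℂ) - w)
        = (Real.cos θ : ℂ) * b / l * (Complex.cos w - Complex.sin w / b * l) := by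
      rw [Complex.sin_sub, ← Complex.ofReal_sin, ← Complex.ofReal_cos, hsin]
      push_cast
      field_simp
    simp only [if_neg hl]
    constructor
    · intro h
      have h0 : Complex.sin ((θ : ℂ) - w) = 0 := by rw [key, h, mul_zero]
      rw [Complex.sin_eq_zero_iff] at h0
      obtain ⟨k, hk⟩ := h0
      refine ⟨-k, ?_⟩
      push_cast
      linear_combination -hk
    · rintro ⟨j, rfl⟩
      have h0 : Complex.sin ((θ : ℂ) - ((θ : ℂ) + (j : ℂ) * (Real.pi : ℂ))) = 0 := by
        rw [Complex.sin_eq_zero_iff]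
        exact ⟨-j, by push_cast; ring⟩
      rw [key] at h0
      rcases mul_eq_zero.mp h0 with h | h
      · exact absurd h (div_ne_zero (mul_ne_zero hcos' hb') hl')
      · exact h

lemma hasEigenvalue_iff_exists_eigenvalues
    {E : Type*} [NormedAddCommGroup E] [InnerProductSpace ℝ E] [FiniteDimensional ℝ E]
    (A : E →ₗ[ℝ] E) (hA : A.IsSymmetric) {n : ℕ} (hn : Module.finrank ℝ E = n) (l : ℝ) :
    Module.End.HasEigenvalue A l ↔ ∃ i : Fin n, hA.eigenvalues hn i = l := by
  constructor
  · intro h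
    obtain ⟨v, hv⟩ := h.exists_hasEigenvector
    have hv0 : v ≠ 0 := hv.2
    have hAv : A v = l • v := Module.End.mem_eigenspace_iff.mp hv.1
    have hrep : (hA.eigenvectorBasis hn).repr v ≠ 0 := by
      intro h0
      exact hv0 (by simpa using congrArg (hA.eigenvectorBasis hn).repr.symm h0)
    obtain ⟨i, hi⟩ : ∃ i, (hA.eigenvectorBasis hn).repr v i ≠ 0 := by
      by_contra hc
      push_neg at hc
      exact hrep (by ext i; simpa using hc i)
    refine ⟨i, ?_⟩
    have h1 := hA.eigenvectorBasis_apply_self_apply hn v i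
    rw [hAv] at h1
    have h2 : ((hA.eigenvectorBasis hn).repr (l • v)) i
        = l * (hA.eigenvectorBasis hn).repr v i := by
      rw [map_smul]; rfl
    rw [h2] at h1
    exact mul_right_cancel₀ hi h1.symm
  · rintro ⟨i, rfl⟩
    exact hA.hasEigenvalue_eigenvalues hn i

lemma det_cos_smul_sub_sin_smul_baseChange
    {E : Type*} [NormedAddCommGroup E] [InnerProductSpace ℝ E] [FiniteDimensional ℝ E]
    (A : E →ₗ[ℝ] E) (hA : A.IsSymmetric) {n : ℕ} (hn : Module.finrank ℝ E = n) (c s : ℂ) :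
    LinearMap.det (c • (1 : ℂ ⊗[ℝ] E →ₗ[ℂ] ℂ ⊗[ℝ] E) - s • LinearMap.baseChange ℂ A)
      = ∏ i : Fin n, (c - s * (hA.eigenvalues hn i : ℂ)) := by
  classical
  set B : Module.Basis (Fin n) ℝ E := (hA.eigenvectorBasis hn).toBasis with hB
  set Bc : Module.Basis (Fin n) ℂ (ℂ ⊗[ℝ] E) := Algebra.TensorProduct.basis ℂ B with hBc
  set T := c • (1 : ℂ ⊗[ℝ] E →ₗ[ℂ] ℂ ⊗[ℝ] E) - s • LinearMap.baseChange ℂ A with hT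
  have hTB : ∀ j, T (Bc j) = (c - s * (hA.eigenvalues hn j : ℂ)) • Bc j := by
    intro j
    have hAB : A (B j) = hA.eigenvalues hn j • B j := by
      rw [hB, OrthonormalBasis.coe_toBasis]
      exact hA.apply_eigenvectorBasis hn j
    have h1 : (1 : ℂ) ⊗ₜ[ℝ] (A (B j)) = ((hA.eigenvalues hn j : ℝ) : ℂ) • ((1 : ℂ) ⊗ₜ[ℝ] (B j)) := by
      rw [hAB, TensorProduct.tmul_smul]
      rw [← Complex.coe_algebraMap, algebraMap_smul]
    simp only [hT, LinearMap.sub_apply, LinearMap.smul_apply, Module.End.one_apply,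
      hBc, Algebra.TensorProduct.basis_apply, LinearMap.baseChange_tmul, h1,
      smul_smul, sub_smul]
  have hM : LinearMap.toMatrix Bc Bc T
      = Matrix.diagonal (fun i => c - s * (hA.eigenvalues hn i : ℂ)) := by
    ext i j
    rw [LinearMap.toMatrix_apply, hTB, map_smul, Finsupp.smul_apply, Module.Basis.repr_self]
    by_cases h : i = j
    · subst h; simp
    · simp [Matrix.diagonal_apply_ne _ h, Finsupp.single_apply, Ne.symm h]
  rw [← LinearMap.det_toMatrix Bc, hM, Matrix.det_diagonal]

/-- Let `E` be a finite-dimensional real inner product space, `A` a self-adjoint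
endomorphism of `E`, `b > 0`, `E_ℂ := ℂ ⊗[ℝ] E` and `A_ℂ := LinearMap.baseChange ℂ A`.  For every
complex number `z`, the determinant `det(cos(z·b) • id − (sin(z·b)/b) • A_ℂ)` vanishes if and
only if there exist a real eigenvalue `λ` of `A` and an integer `j` such that
`z = ((if λ = 0 then π/2 else arctan (b/λ)) + j·π)/b`.  In particular, every complex zero of this
function is real. -/
theorem det_complexified_cos_smul_sub_sin_smul_eq_zero_iff
    {E : Type*} [NormedAddCommGroup E] [InnerProductSpace ℝ E] [FiniteDimensional ℝ E]
    (A : E →ₗ[ℝ] E) (hA : A.IsSymmetric) (b : ℝ) (hb : 0 < b) (z : ℂ) :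
    (LinearMap.det (Complex.cos (z * (b : ℂ)) • (1 : ℂ ⊗[ℝ] E →ₗ[ℂ] ℂ ⊗[ℝ] E)
        - (Complex.sin (z * (b : ℂ)) / (b : ℂ)) • LinearMap.baseChange ℂ A) = 0 ↔
      ∃ l : ℝ, Module.End.HasEigenvalue A l ∧
        ∃ j : ℤ, z = (((if l = 0 then Real.pi / 2 else Real.arctan (b / l)) : ℝ)
          + (j : ℂ) * (Real.pi : ℂ)) / (b : ℂ)) ∧
    (LinearMap.det (Complex.cos (z * (b : ℂ)) • (1 : ℂ ⊗[ℝ] E →ₗ[ℂ] ℂ ⊗[ℝ] E)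
        - (Complex.sin (z * (b : ℂ)) / (b : ℂ)) • LinearMap.baseChange ℂ A) = 0 → z.im = 0) := by
  have hb' : (b : ℂ) ≠ 0 := Complex.ofReal_ne_zero.mpr hb.ne'
  have hn : Module.finrank ℝ E = Module.finrank ℝ E := rfl
  have hiff : (LinearMap.det (Complex.cos (z * (b : ℂ)) • (1 : ℂ ⊗[ℝ] E →ₗ[ℂ] ℂ ⊗[ℝ] E)
        - (Complex.sin (z * (b : ℂ)) / (b : ℂ)) • LinearMap.baseChange ℂ A) = 0 ↔
      ∃ l : ℝ, Module.End.HasEigenvalue A l ∧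
        ∃ j : ℤ, z = (((if l = 0 then Real.pi / 2 else Real.arctan (b / l)) : ℝ)
          + (j : ℂ) * (Real.pi : ℂ)) / (b : ℂ)) := by
    rw [det_cos_smul_sub_sin_smul_baseChange A hA hn, Finset.prod_eq_zero_iff]
    constructor
    · rintro ⟨i, -, hi⟩
      refine ⟨hA.eigenvalues hn i,
        (hasEigenvalue_iff_exists_eigenvalues A hA hn _).mpr ⟨i, rfl⟩, ?_⟩
      obtain ⟨j, hj⟩ := (trig_factor_eq_zero_iff b (hA.eigenvalues hn i) hb (z * b)).mp
        (by linear_combination hi)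
      exact ⟨j, by rw [eq_div_iff hb']; exact hj⟩
    · rintro ⟨l, hl, j, hz⟩
      obtain ⟨i, rfl⟩ := (hasEigenvalue_iff_exists_eigenvalues A hA hn l).mp hl
      refine ⟨i, Finset.mem_univ i, ?_⟩
      have hw : z * (b : ℂ)
          = (((if hA.eigenvalues hn i = 0 then Real.pi / 2
              else Real.arctan (b / hA.eigenvalues hn i)) : ℝ) : ℂ)
            + (j : ℂ) * (Real.pi : ℂ) := by
        rw [hz, div_mul_cancel₀ _ hb']
      have := (trig_factor_eq_zero_iff b (hA.eigenvalues hn i) hb (z * b)).mpr ⟨j, hw⟩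
      linear_combination this
  refine ⟨hiff, fun h => ?_⟩
  obtain ⟨l, -, j, hz⟩ := hiff.mp h
  have : z = ((((if l = 0 then Real.pi / 2 else Real.arctan (b / l))
      + (j : ℝ) * Real.pi) / b : ℝ) : ℂ) := by
    rw [hz]; push_cast; ring
  rw [this, Complex.ofReal_im]
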